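/- Let d ≥ 1, k ≥ 1, and let t₁, …, t_{2k+2} ∈ ℤ^d be an O_k-configuration. Then for each index i there exists a unique index i′ ≠ i such that ‖t_i − t_{i′}‖_∞ ≥ 2, and for this i′ one in fact has ‖t_i − t_{i′}‖_∞ = 2 (while ‖t_i − t_j‖_∞ = 1 for every j ∉ {i, i′}). -/
import Mathlib


/-- The `ℓ∞` distance between two points of `ℤ^d`, as a natural number. -/
def linfDist {d : ℕ} (x y : Fin d → ℤ) : ℕ :=
  Finset.univ.sup fun i => (x i - y i).natAbs

/-- A family of `2k+2` distinct points of `ℤ^d` is an `O_k`-configuration if, in the graph on the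
indices with an edge exactly when the `ℓ∞` distance is `1`, every index is adjacent to all others
except exactly one. -/
def IsOkConfig (d k : ℕ) (t : Fin (2 * k + 2) → Fin d → ℤ) : Prop :=
  Function.Injective t ∧
    ∀ i : Fin (2 * k + 2), ∃! i' : Fin (2 * k + 2), i' ≠ i ∧ linfDist (t i) (t i') ≠ 1

lemma linfDist_comm {d : ℕ} (x y : Fin d → ℤ) : linfDist x y = linfDist y x := by
  unfold linfDist
  congr 1
  funext i
  rw [← Int.natAbs_neg, neg_sub]

lemma linfDist_eq_zero {d : ℕ} {x y : Fin d → ℤ} (h : linfDist x y = 0) : x = y := by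
  funext i
  have := Finset.le_sup (f := fun i => (x i - y i).natAbs) (Finset.mem_univ i)
  rw [show (Finset.univ.sup fun i => (x i - y i).natAbs) = linfDist x y from rfl, h,
    Nat.le_zero, Int.natAbs_eq_zero, sub_eq_zero] at this
  exact this

lemma linfDist_triangle {d : ℕ} (x y z : Fin d → ℤ) :
    linfDist x z ≤ linfDist x y + linfDist y z := by
  unfold linfDist
  apply Finset.sup_le
  intro i _
  calc (x i - z i).natAbs = ((x i - y i) + (y i - z i)).natAbs := by ring_nf
    _ ≤ (x i - y i).natAbs + (y i - z i).natAbs := Int.natAbs_add_le _ _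
    _ ≤ linfDist x y + linfDist y z :=
        Nat.add_le_add
          (Finset.le_sup (f := fun i => (x i - y i).natAbs) (Finset.mem_univ i))
          (Finset.le_sup (f := fun i => (y i - z i).natAbs) (Finset.mem_univ i))

/-- In an `O_k`-configuration (`d ≥ 1`, `k ≥ 1`), for each index `i` there is a
unique index `i' ≠ i` with `ℓ∞` distance at least `2` from `i`; for this `i'` the distance is in
fact exactly `2`, and all other indices are at `ℓ∞` distance exactly `1` from `i`. -/
theorem okConfig_unique_far_partner (d k : ℕ) (hd : 1 ≤ d) (hk : 1 ≤ k)
    (t : Fin (2 * k + 2) → Fin d → ℤ) (ht : IsOkConfig d k t) :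
    ∀ i : Fin (2 * k + 2), ∃ i' : Fin (2 * k + 2), i' ≠ i ∧
      linfDist (t i) (t i') = 2 ∧
      (∀ j : Fin (2 * k + 2), j ≠ i → 2 ≤ linfDist (t i) (t j) → j = i') ∧
      (∀ j : Fin (2 * k + 2), j ≠ i → j ≠ i' → linfDist (t i) (t j) = 1) := by
  obtain ⟨hinj, huniq⟩ := ht
  intro i
  obtain ⟨i', ⟨hne, hdist⟩, hu⟩ := huniq i
  -- all other j are adjacent to i
  have hadj : ∀ j : Fin (2 * k + 2), j ≠ i → j ≠ i' → linfDist (t i) (t j) = 1 := by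
    intro j hji hji'
    by_contra h
    exact hji' (hu j ⟨hji, h⟩)
  -- i is the far partner of i'
  obtain ⟨i'', ⟨hne'', hd''⟩, hu'⟩ := huniq i'
  have hii'' : i = i'' := by
    apply hu'
    refine ⟨fun h => hne h.symm, ?_⟩
    rw [linfDist_comm]
    exact hdist
  have hadj' : ∀ j : Fin (2 * k + 2), j ≠ i → j ≠ i' → linfDist (t i') (t j) = 1 := by
    intro j hji hji'
    by_contra h
    exact hji ((hu' j ⟨hji', h⟩).trans hii''.symm)
  -- pick a third point
  obtain ⟨j, hji, hji'⟩ : ∃ j : Fin (2 * k + 2), j ≠ i ∧ j ≠ i' := by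
    by_contra h
    push_neg at h
    have hsub : (Finset.univ : Finset (Fin (2 * k + 2))) ⊆ {i, i'} := by
      intro j _
      rcases eq_or_ne j i with h' | h'
      · simp [h']
      · simp [h j h']
    have h1 := Finset.card_le_card hsub
    have h2 : ({i, i'} : Finset (Fin (2 * k + 2))).card ≤ 2 := by
      apply le_trans (Finset.card_insert_le _ _)
      simp
    simp only [Finset.card_univ, Fintype.card_fin] at h1
    omega
  have htri := linfDist_triangle (t i) (t j) (t i')
  have h1 : linfDist (t i) (t j) = 1 := hadj j hji hji'
  have h2 : linfDist (t j) (t i') = 1 := by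
    rw [linfDist_comm]; exact hadj' j hji hji'
  have hpos : linfDist (t i) (t i') ≠ 0 := by
    intro h
    exact hne (hinj (linfDist_eq_zero h).symm)
  have heq2 : linfDist (t i) (t i') = 2 := by omega
  refine ⟨i', hne, heq2, ?_, hadj⟩
  intro j' hj'i hj'2
  apply hu
  exact ⟨hj'i, by omega⟩
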